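/- arXiv:1401.7955 — 3 statements merged into one kernel-verified Lean document; each statement's English description precedes it below -/
import Mathlib

section
/- Let G be a nonabelian 2-group with G/G' of type (2,4). Then the third term of the lower central series γ₃(G) is the unique maximal subgroup of G' that is normal in G, and it equals Φ(G')γ₃(G), where Φ denotes the Frattini subgroup. -/
open Subgroup
open scoped commutatorElement

/-- In a nilpotent group, if the lower central series stabilizes at step 1→2,
then the commutator subgroup is trivial. -/
private lemma lcs_stab {H : Type*} [Group H] (hnil : Group.IsNilpotent H)
    (h : (⊤ : Subgroup H).lowerCentralSeries 2 = (⊤ : Subgroup H).lowerCentralSeries 1) :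
    _root_.commutator H = ⊥ := by
  have key : ∀ n, (⊤ : Subgroup H).lowerCentralSeries 1 ≤ (⊤ : Subgroup H).lowerCentralSeries (n + 1) := by
    intro n
    induction n with
    | zero => exact le_rfl
    | succ n ih =>
      calc (⊤ : Subgroup H).lowerCentralSeries 1 = (⊤ : Subgroup H).lowerCentralSeries 2 := h.symm
        _ = ⁅(⊤ : Subgroup H).lowerCentralSeries 1, ⊤⁆ := Subgroup.lowerCentralSeries_succ _ _
        _ ≤ ⁅(⊤ : Subgroup H).lowerCentralSeries (n + 1), ⊤⁆ := Subgroup.commutator_mono ih le_rfl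
        _ = (⊤ : Subgroup H).lowerCentralSeries (n + 2) := (Subgroup.lowerCentralSeries_succ _ _).symm
  obtain ⟨n, hn⟩ := Subgroup.nilpotent_iff_lowerCentralSeries.mp hnil
  cases n with
  | zero =>
    have : _root_.commutator H ≤ ⊥ := by
      rw [← hn, Subgroup.lowerCentralSeries_zero]; exact le_top
    exact le_bot_iff.mp this
  | succ m => exact le_bot_iff.mp (hn ▸ key m)

section Bilin

variable {Q : Type*} [Group Q] (hCC : ∀ x y : Q, ⁅x, y⁆ ∈ Subgroup.center Q)

private lemma conj_central (hCC : ∀ x y : Q, ⁅x, y⁆ ∈ Subgroup.center Q)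
    (w y x : Q) : x * ⁅w, y⁆ * x⁻¹ = ⁅w, y⁆ := by
  rw [Subgroup.mem_center_iff.mp (hCC w y) x, mul_inv_cancel_right]

private lemma comm_mul_left (hCC : ∀ x y : Q, ⁅x, y⁆ ∈ Subgroup.center Q)
    (x w y : Q) : ⁅x * w, y⁆ = ⁅w, y⁆ * ⁅x, y⁆ := by
  have e1 : ⁅x * w, y⁆ = x * ⁅w, y⁆ * x⁻¹ * ⁅x, y⁆ := by group
  rw [e1, conj_central hCC]

private lemma comm_mul_right (hCC : ∀ x y : Q, ⁅x, y⁆ ∈ Subgroup.center Q)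
    (x y z : Q) : ⁅x, y * z⁆ = ⁅x, y⁆ * ⁅x, z⁆ := by
  have e2 : ⁅x, y * z⁆ = ⁅x, y⁆ * (y * ⁅x, z⁆ * y⁻¹) := by group
  rw [e2, conj_central hCC]

private lemma comm_inv_right (hCC : ∀ x y : Q, ⁅x, y⁆ ∈ Subgroup.center Q)
    (x y : Q) : ⁅x, y⁻¹⁆ = ⁅x, y⁆⁻¹ := by
  have := comm_mul_right hCC x y y⁻¹
  rw [mul_inv_cancel, commutatorElement_one_right] at this
  exact (inv_eq_of_mul_eq_one_right this.symm).symm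

private lemma comm_inv_left (hCC : ∀ x y : Q, ⁅x, y⁆ ∈ Subgroup.center Q)
    (x y : Q) : ⁅x⁻¹, y⁆ = ⁅x, y⁆⁻¹ := by
  have := comm_mul_left hCC x x⁻¹ y
  rw [mul_inv_cancel, commutatorElement_one_left] at this
  exact eq_inv_of_mul_eq_one_left this.symm

private lemma key_comm_mem {α β : Q} (hCC : ∀ x y : Q, ⁅x, y⁆ ∈ Subgroup.center Q)
    (hgen : ∀ S : Subgroup Q, α ∈ S → β ∈ S → Subgroup.center Q ≤ S → S = ⊤) :
    ∀ x y : Q, ⁅x, y⁆ ∈ Subgroup.zpowers ⁅α, β⁆ := by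
  set γ := ⁅α, β⁆ with hγ
  let Tx : Q → Subgroup Q := fun x =>
    { carrier := {y | ⁅x, y⁆ ∈ Subgroup.zpowers γ}
      one_mem' := by
        show ⁅x, (1 : Q)⁆ ∈ Subgroup.zpowers γ
        rw [commutatorElement_one_right]; exact one_mem _
      mul_mem' := by
        intro y z hy hz
        show ⁅x, y * z⁆ ∈ Subgroup.zpowers γ
        rw [comm_mul_right hCC]
        exact mul_mem (hy : ⁅x, y⁆ ∈ Subgroup.zpowers γ) (hz : ⁅x, z⁆ ∈ Subgroup.zpowers γ)
      inv_mem' := by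
        intro y hy
        show ⁅x, y⁻¹⁆ ∈ Subgroup.zpowers γ
        rw [comm_inv_right hCC]
        exact inv_mem (hy : ⁅x, y⁆ ∈ Subgroup.zpowers γ) }
  have hmemTx : ∀ x y : Q, y ∈ Tx x ↔ ⁅x, y⁆ ∈ Subgroup.zpowers γ := fun x y => Iff.rfl
  have hcentT : ∀ x : Q, Subgroup.center Q ≤ Tx x := by
    intro x z hz
    rw [hmemTx, commutatorElement_eq_one_iff_commute.mpr (Subgroup.mem_center_iff.mp hz x)]
    exact one_mem _
  have hTα : Tx α = ⊤ := by
    refine hgen _ ?_ ?_ (hcentT α)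
    · rw [hmemTx, commutatorElement_self]; exact one_mem _
    · rw [hmemTx]; exact mem_zpowers γ
  have hTβ : Tx β = ⊤ := by
    refine hgen _ ?_ ?_ (hcentT β)
    · rw [hmemTx, ← commutatorElement_inv]
      exact inv_mem (mem_zpowers γ)
    · rw [hmemTx, commutatorElement_self]; exact one_mem _
  let S : Subgroup Q :=
    { carrier := {x | ∀ y : Q, ⁅x, y⁆ ∈ Subgroup.zpowers γ}
      one_mem' := by
        show ∀ y : Q, ⁅(1 : Q), y⁆ ∈ Subgroup.zpowers γ
        intro y
        rw [commutatorElement_one_left]; exact one_mem _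
      mul_mem' := by
        intro x w hx hw
        show ∀ y : Q, ⁅x * w, y⁆ ∈ Subgroup.zpowers γ
        intro y
        rw [comm_mul_left hCC]
        exact mul_mem ((hw : ∀ y : Q, ⁅w, y⁆ ∈ Subgroup.zpowers γ) y)
          ((hx : ∀ y : Q, ⁅x, y⁆ ∈ Subgroup.zpowers γ) y)
      inv_mem' := by
        intro x hx
        show ∀ y : Q, ⁅x⁻¹, y⁆ ∈ Subgroup.zpowers γ
        intro y
        rw [comm_inv_left hCC]
        exact inv_mem ((hx : ∀ y : Q, ⁅x, y⁆ ∈ Subgroup.zpowers γ) y) }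
  have hmemS : ∀ x : Q, x ∈ S ↔ ∀ y : Q, ⁅x, y⁆ ∈ Subgroup.zpowers γ := fun x => Iff.rfl
  have hS : S = ⊤ := by
    refine hgen S ?_ ?_ ?_
    · rw [hmemS]; intro y
      rw [← hmemTx]
      rw [hTα]; exact Subgroup.mem_top y
    · rw [hmemS]; intro y
      rw [← hmemTx]
      rw [hTβ]; exact Subgroup.mem_top y
    · intro z hz
      rw [hmemS]; intro y
      rw [commutatorElement_eq_one_iff_commute.mpr
        ((Subgroup.mem_center_iff.mp hz y).symm)]
      exact one_mem _
  intro x y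
  have hx : x ∈ S := hS ▸ Subgroup.mem_top x
  exact (hmemS x).mp hx y

end Bilin

private lemma uv_mul_self :
    (Multiplicative.ofAdd ((1 : ZMod 2), (0 : ZMod 4))) *
      Multiplicative.ofAdd ((1 : ZMod 2), (0 : ZMod 4)) = 1 := by decide

private lemma uv_decomp : ∀ x : Multiplicative (ZMod 2 × ZMod 4),
    x = Multiplicative.ofAdd ((1 : ZMod 2), (0 : ZMod 4)) ^ (Multiplicative.toAdd x).1.val *
        Multiplicative.ofAdd ((0 : ZMod 2), (1 : ZMod 4)) ^ (Multiplicative.toAdd x).2.val := by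
  decide

private lemma closure_uv :
    Subgroup.closure {Multiplicative.ofAdd ((1 : ZMod 2), (0 : ZMod 4)),
      Multiplicative.ofAdd ((0 : ZMod 2), (1 : ZMod 4))} = ⊤ := by
  rw [eq_top_iff]
  intro x _
  rw [uv_decomp x]
  exact mul_mem (pow_mem (Subgroup.subset_closure (by simp)) _)
    (pow_mem (Subgroup.subset_closure (by simp)) _)

/-- Let `G` be a nonabelian finite 2-group with `G/G'` of type `(2,4)`. Then
`γ₃(G)` is the unique maximal subgroup of `G' = γ₂(G)` that is normal in `G`,
and it equals `Φ(G')γ₃(G)` where `Φ` is the Frattini subgroup. -/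
theorem gamma3_unique_maximal_normal
    {G : Type*} [Group G] [Finite G] (hG : IsPGroup 2 G)
    (hnab : ¬ ∀ x y : G, Commute x y)
    (htype : Nonempty ((G ⧸ commutator G) ≃* Multiplicative (ZMod 2 × ZMod 4))) :
    ((⊤ : Subgroup G).lowerCentralSeries 2 < commutator G ∧ ((⊤ : Subgroup G).lowerCentralSeries 2).Normal ∧
      (∀ K : Subgroup G, (⊤ : Subgroup G).lowerCentralSeries 2 < K → K ≤ commutator G →
        K = commutator G) ∧
      (∀ N : Subgroup G, N.Normal → N < commutator G →
        (∀ K : Subgroup G, N < K → K ≤ commutator G → K = commutator G) →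
        N = (⊤ : Subgroup G).lowerCentralSeries 2)) ∧
    Subgroup.map (commutator G).subtype (frattini ↥(commutator G)) ⊔
        (⊤ : Subgroup G).lowerCentralSeries 2 = (⊤ : Subgroup G).lowerCentralSeries 2 := by
  haveI hp2 : Fact (Nat.Prime 2) := ⟨Nat.prime_two⟩
  haveI hnil : Group.IsNilpotent G := hG.isNilpotent
  set N := (⊤ : Subgroup G).lowerCentralSeries 2 with hNdef
  have hNle : N ≤ commutator G := by
    have := Subgroup.lowerCentralSeries_antitone (⊤ : Subgroup G) (one_le_two)
    rwa [top_lowerCentralSeries_one] at this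
  have hmemN : ∀ x y z : G, ⁅⁅x, y⁆, z⁆ ∈ N := by
    intro x y z
    rw [hNdef, Subgroup.lowerCentralSeries_succ]
    refine Subgroup.commutator_mem_commutator ?_ (Subgroup.mem_top z)
    rw [top_lowerCentralSeries_one, _root_.commutator_def]
    exact Subgroup.commutator_mem_commutator (Subgroup.mem_top x) (Subgroup.mem_top y)
  set Q := G ⧸ N with hQdef
  set π : G →* Q := QuotientGroup.mk' N with hπdef
  have hπs : Function.Surjective π := QuotientGroup.mk'_surjective N
  have hker : ∀ g : G, π g = 1 ↔ g ∈ N := by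
    intro g
    rw [← MonoidHom.mem_ker, QuotientGroup.ker_mk']
  -- all commutators in Q are central
  have hCC : ∀ x y : Q, ⁅x, y⁆ ∈ Subgroup.center Q := by
    intro x y
    obtain ⟨x', rfl⟩ := hπs x
    obtain ⟨y', rfl⟩ := hπs y
    rw [Subgroup.mem_center_iff]
    intro s
    obtain ⟨z, rfl⟩ := hπs s
    have h1 : ⁅⁅π x', π y'⁆, π z⁆ = 1 := by
      rw [← map_commutatorElement, ← map_commutatorElement]
      exact (hker _).mpr (hmemN x' y' z)
    exact (commutatorElement_eq_one_iff_commute.mp h1).symm.eq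
  have hmapcent : Subgroup.map π (commutator G) ≤ Subgroup.center Q := by
    rw [_root_.commutator_def, Subgroup.map_commutator,
      Subgroup.map_top_of_surjective _ hπs, Subgroup.commutator_def,
      Subgroup.closure_le]
    rintro q ⟨g₁, -, g₂, -, rfl⟩
    exact hCC g₁ g₂
  -- generators from the (2,4) structure
  obtain ⟨e⟩ := htype
  set u : Multiplicative (ZMod 2 × ZMod 4) := Multiplicative.ofAdd ((1 : ZMod 2), (0 : ZMod 4)) with hudef
  set v : Multiplicative (ZMod 2 × ZMod 4) := Multiplicative.ofAdd ((0 : ZMod 2), (1 : ZMod 4)) with hvdef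
  have hu2 : u * u = 1 := uv_mul_self
  have hcluv : Subgroup.closure {u, v} = ⊤ := closure_uv
  set φ : G →* G ⧸ commutator G := QuotientGroup.mk' (commutator G) with hφdef
  have hφs : Function.Surjective φ := QuotientGroup.mk'_surjective _
  obtain ⟨a, ha⟩ := hφs (e.symm u)
  obtain ⟨b, hb⟩ := hφs (e.symm v)
  have ha2 : a * a ∈ commutator G := by
    have h1 : φ (a * a) = 1 := by
      rw [map_mul, ha, ← map_mul, hu2, map_one]
    rw [← MonoidHom.mem_ker] at h1
    rwa [hφdef, QuotientGroup.ker_mk'] at h1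
  have hgenG : Subgroup.closure {a, b} ⊔ commutator G = ⊤ := by
    have hmap : Subgroup.map φ (Subgroup.closure {a, b}) = ⊤ := by
      rw [MonoidHom.map_closure]
      have himg : φ '' {a, b} = {e.symm u, e.symm v} := by
        rw [Set.image_insert_eq, Set.image_singleton, ha, hb]
      rw [himg]
      have h2 : Subgroup.closure ({e.symm u, e.symm v} : Set (G ⧸ commutator G))
          = Subgroup.map e.symm.toMonoidHom (Subgroup.closure {u, v}) := by
        rw [MonoidHom.map_closure, Set.image_insert_eq, Set.image_singleton]
        rfl
      rw [h2, hcluv, Subgroup.map_top_of_surjective _ e.symm.surjective]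
    have hker' : φ.ker ≤ Subgroup.closure {a, b} ⊔ commutator G := by
      rw [hφdef, QuotientGroup.ker_mk']; exact le_sup_right
    calc Subgroup.closure {a, b} ⊔ commutator G
        = Subgroup.comap φ (Subgroup.map φ (Subgroup.closure {a, b} ⊔ commutator G)) :=
          (Subgroup.comap_map_eq_self hker').symm
      _ = ⊤ := by
          rw [Subgroup.map_sup, hmap, top_sup_eq, Subgroup.comap_top]
  -- move to Q
  set α : Q := π a with hαdef
  set β : Q := π b with hβdef
  have hgenQ : ∀ S : Subgroup Q, α ∈ S → β ∈ S → Subgroup.center Q ≤ S → S = ⊤ := by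
    intro S hα hβ hc
    rw [eq_top_iff]
    intro q _
    obtain ⟨g, rfl⟩ := hπs q
    have hg : g ∈ Subgroup.closure {a, b} ⊔ commutator G := by
      rw [hgenG]; exact Subgroup.mem_top g
    have h1 : π g ∈ Subgroup.map π (Subgroup.closure {a, b}) ⊔ Subgroup.map π (commutator G) := by
      rw [← Subgroup.map_sup]
      exact Subgroup.mem_map_of_mem π hg
    refine sup_le ?_ (hmapcent.trans hc) h1
    rw [MonoidHom.map_closure, Set.image_insert_eq, Set.image_singleton,
      Subgroup.closure_le]
    rintro x (rfl | rfl)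
    · exact hα
    · exact hβ
  set γ : Q := ⁅α, β⁆ with hγdef
  have hKey : ∀ x y : Q, ⁅x, y⁆ ∈ Subgroup.zpowers γ := key_comm_mem hCC hgenQ
  have hγ2 : γ * γ = 1 := by
    have hαα : α * α ∈ Subgroup.center Q := by
      have h1 : π (a * a) ∈ Subgroup.center Q :=
        hmapcent (Subgroup.mem_map_of_mem π ha2)
      rwa [map_mul] at h1
    calc γ * γ = ⁅α * α, β⁆ := (comm_mul_left hCC α α β).symm
      _ = 1 := commutatorElement_eq_one_iff_commute.mpr
          ((Subgroup.mem_center_iff.mp hαα β).symm)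
  have hγπ : γ = π ⁅a, b⁆ := by rw [map_commutatorElement]
  set c : G := ⁅a, b⁆ with hcdef
  have hcΓ : c ∈ commutator G := by
    rw [_root_.commutator_def]
    exact Subgroup.commutator_mem_commutator (Subgroup.mem_top a) (Subgroup.mem_top b)
  have hdichot : ∀ g ∈ commutator G, g ∈ N ∨ g * c⁻¹ ∈ N := by
    intro g hg
    have hπg : π g ∈ Subgroup.zpowers γ := by
      have hle : commutator G ≤ Subgroup.comap π (Subgroup.zpowers γ) := by
        rw [_root_.commutator_def, Subgroup.commutator_def, Subgroup.closure_le]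
        rintro x ⟨g₁, -, g₂, -, rfl⟩
        show ⁅g₁, g₂⁆ ∈ Subgroup.comap π (Subgroup.zpowers γ)
        rw [Subgroup.mem_comap, map_commutatorElement]
        exact hKey _ _
      exact hle hg
    rw [Subgroup.mem_zpowers_iff] at hπg
    obtain ⟨k, hk⟩ := hπg
    have hsq : ∀ m : ℤ, γ ^ (m + m) = 1 := by
      intro m
      rw [zpow_add, ← (Commute.refl γ).mul_zpow, hγ2, one_zpow]
    rcases Int.even_or_odd k with ⟨m, hm⟩ | ⟨m, hm⟩
    · left
      have h1 : π g = 1 := by rw [← hk, hm, hsq]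
      exact (hker g).mp h1
    · right
      have h1 : π g = γ := by
        rw [← hk, hm, zpow_add, zpow_one, show (2 : ℤ) * m = m + m by ring, hsq, one_mul]
      have h2 : π (g * c⁻¹) = 1 := by
        rw [map_mul, map_inv, h1, hγπ, mul_inv_cancel]
      exact (hker _).mp h2
  have hcnotN : c ∉ N := by
    intro hcN
    have hGN : commutator G = N := by
      refine le_antisymm (fun g hg => ?_) hNle
      rcases hdichot g hg with h | h
      · exact h
      · have h2 := mul_mem h hcN
        simpa using h2
    have hbot : _root_.commutator G = ⊥ := by
      refine lcs_stab hnil ?_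
      rw [← hNdef, top_lowerCentralSeries_one, hGN]
    apply hnab
    intro x y
    have h3 : ⁅x, y⁆ ∈ _root_.commutator G := by
      rw [_root_.commutator_def]
      exact Subgroup.commutator_mem_commutator (Subgroup.mem_top x) (Subgroup.mem_top y)
    rw [hbot, Subgroup.mem_bot] at h3
    exact commutatorElement_eq_one_iff_commute.mp h3
  have hlt : N < commutator G := by
    refine lt_of_le_of_ne hNle (fun h => hcnotN ?_)
    rw [h]; exact hcΓ
  have hmaxN : ∀ K : Subgroup G, N < K → K ≤ commutator G → K = commutator G := by
    intro K hNK hKle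
    obtain ⟨k, hkK, hkN⟩ := SetLike.exists_of_lt hNK
    have hck : c ∈ K := by
      rcases hdichot k (hKle hkK) with h | h
      · exact absurd h hkN
      · have h1 : k * c⁻¹ ∈ K := hNK.le h
        have h2 := mul_mem (inv_mem h1) hkK
        simpa [mul_assoc] using h2
    refine le_antisymm hKle (fun g hg => ?_)
    rcases hdichot g hg with h | h
    · exact hNK.le h
    · have h2 := mul_mem (hNK.le h) hck
      simpa using h2
  have huniq : ∀ N' : Subgroup G, N'.Normal → N' < commutator G →
      (∀ K : Subgroup G, N' < K → K ≤ commutator G → K = commutator G) →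
      N' = N := by
    intro N' hN'normal hN'lt hN'max
    by_cases hNle' : N ≤ N'
    · refine le_antisymm (fun k hk => ?_) hNle'
      by_contra hkN
      have hck : c ∈ N' := by
        rcases hdichot k (hN'lt.le hk) with h | h
        · exact absurd h hkN
        · have h1 : k * c⁻¹ ∈ N' := hNle' h
          have h2 := mul_mem (inv_mem h1) hk
          simpa [mul_assoc] using h2
      have h3 : commutator G ≤ N' := by
        intro g hg
        rcases hdichot g hg with h | h
        · exact hNle' h
        · have h4 := mul_mem (hNle' h) hck
          simpa using h4
      exact absurd h3 hN'lt.not_ge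
    · exfalso
      haveI := hN'normal
      have hsup_le : N' ⊔ N ≤ commutator G := sup_le hN'lt.le hNle
      have hlt2 : N' < N' ⊔ N := by
        refine lt_of_le_of_ne le_sup_left (fun h => hNle' ?_)
        exact le_sup_right.trans h.ge
      have hsup : N' ⊔ N = commutator G := hN'max _ hlt2 hsup_le
      set π' : G →* G ⧸ N' := QuotientGroup.mk' N' with hπ'def
      have hπ's : Function.Surjective π' := QuotientGroup.mk'_surjective N'
      haveI hnilQ : Group.IsNilpotent (G ⧸ N') := nilpotent_of_surjective π' hπ's
      have hmapN' : Subgroup.map π' N' = ⊥ := by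
        rw [Subgroup.map_eq_bot_iff, hπ'def, QuotientGroup.ker_mk']
      have h1 : Subgroup.map π' (commutator G) = _root_.commutator (G ⧸ N') := by
        rw [_root_.commutator_def, _root_.commutator_def, Subgroup.map_commutator,
          Subgroup.map_top_of_surjective _ hπ's]
      have h2 : Subgroup.map π' (commutator G) = Subgroup.map π' N := by
        rw [← hsup, Subgroup.map_sup, hmapN', bot_sup_eq]
      have h3 : _root_.commutator (G ⧸ N') ≤ (⊤ : Subgroup (G ⧸ N')).lowerCentralSeries 2 := by
        rw [← h1, h2]
        exact Subgroup.lowerCentralSeries.map π' 2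
      have h4 : (⊤ : Subgroup (G ⧸ N')).lowerCentralSeries 2 = (⊤ : Subgroup (G ⧸ N')).lowerCentralSeries 1 := by
        refine le_antisymm (Subgroup.lowerCentralSeries_antitone ⊤ one_le_two) ?_
        rw [top_lowerCentralSeries_one]
        exact h3
      have hbot := lcs_stab hnilQ h4
      have h5 : commutator G ≤ N' := by
        have h6 : Subgroup.map π' (commutator G) = ⊥ := by rw [h1, hbot]
        rwa [Subgroup.map_eq_bot_iff, hπ'def, QuotientGroup.ker_mk'] at h6
      exact hN'lt.not_ge h5
  have hNmap : Subgroup.map (commutator G).subtype (N.subgroupOf (commutator G)) = N := by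
    rw [Subgroup.subgroupOf_map_subtype, inf_eq_left.mpr hNle]
  have hcoatom : IsCoatom (N.subgroupOf (commutator G)) := by
    constructor
    · intro h
      rw [Subgroup.subgroupOf_eq_top] at h
      exact hlt.not_ge h
    · intro K' hK'
      have hmapK : Subgroup.map (commutator G).subtype K' ≤ commutator G :=
        Subgroup.map_subtype_le K'
      have hNK : N < Subgroup.map (commutator G).subtype K' := by
        rw [← hNmap]
        refine lt_of_le_of_ne (Subgroup.map_mono hK'.le) (fun h => hK'.ne ?_)
        exact Subgroup.map_injective (commutator G).subtype_injective h
      have h7 := hmaxN _ hNK hmapK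
      have h8 := Subgroup.comap_map_eq_self_of_injective
        (commutator G).subtype_injective K'
      rw [h7] at h8
      rw [← h8]
      rw [show Subgroup.comap (commutator G).subtype (commutator G)
        = (commutator G).subgroupOf (commutator G) from rfl, Subgroup.subgroupOf_self]
  have hfr : frattini ↥(commutator G) ≤ N.subgroupOf (commutator G) :=
    frattini_le_coatom hcoatom
  refine ⟨⟨hlt, inferInstance, hmaxN, huniq⟩, ?_⟩
  rw [sup_eq_right]
  calc Subgroup.map (commutator G).subtype (frattini ↥(commutator G))
      ≤ Subgroup.map (commutator G).subtype (N.subgroupOf (commutator G)) :=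
        Subgroup.map_mono hfr
    _ = N := hNmap
end

section
/- Let G be a nonabelian 2-group with G/G' of type (2,4). Then the index of γ₂(G) in itself over γ₃(G) is 2, i.e., [γ₂(G) : γ₃(G)] = 2. -/
open Subgroup
open scoped commutatorElement

set_option maxHeartbeats 1000000

private lemma aux_sq_24 :
    Multiplicative.ofAdd ((1 : ZMod 2), (0 : ZMod 4)) ^ 2
      = (1 : Multiplicative (ZMod 2 × ZMod 4)) := by decide

private lemma aux_add_24 (p : ZMod 2 × ZMod 4) :
    p.1.val • ((1 : ZMod 2), (0 : ZMod 4)) + p.2.val • ((0 : ZMod 2), (1 : ZMod 4)) = p := by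
  refine Prod.ext ?_ ?_ <;>
    simp [nsmul_eq_mul, ZMod.natCast_val, ZMod.cast_id]

private lemma aux_gen_24 (p : ZMod 2 × ZMod 4) :
    Multiplicative.ofAdd p =
      Multiplicative.ofAdd ((1 : ZMod 2), (0 : ZMod 4)) ^ p.1.val *
        Multiplicative.ofAdd ((0 : ZMod 2), (1 : ZMod 4)) ^ p.2.val := by
  conv_lhs => rw [← aux_add_24 p]
  rw [ofAdd_add, ofAdd_nsmul, ofAdd_nsmul]

private lemma aux_mem_closure_pair {M : Type*} [Group M] (u v w : M) (m n : ℕ)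
    (h : w = u ^ m * v ^ n) : w ∈ Subgroup.closure ({u, v} : Set M) := by
  subst h
  have h1 : u ∈ ({u, v} : Set M) := Set.mem_insert _ _
  have h2 : v ∈ ({u, v} : Set M) := Set.mem_insert_of_mem _ (Set.mem_singleton v)
  exact mul_mem (pow_mem (Subgroup.subset_closure h1) m)
    (pow_mem (Subgroup.subset_closure h2) n)

/-- Let `G` be a nonabelian finite 2-group with `G/G'` of type `(2,4)`. Then
`[γ₂(G) : γ₃(G)] = 2`. -/
theorem index_gamma2_gamma3_eq_two
    {G : Type*} [Group G] [Finite G] (hG : IsPGroup 2 G)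
    (hnab : ¬ ∀ x y : G, Commute x y)
    (htype : Nonempty ((G ⧸ commutator G) ≃* Multiplicative (ZMod 2 × ZMod 4))) :
    ((⊤ : Subgroup G).lowerCentralSeries 2).relIndex ((⊤ : Subgroup G).lowerCentralSeries 1) = 2 := by
  classical
  haveI : Fact (Nat.Prime 2) := ⟨Nat.prime_two⟩
  haveI : Group.IsNilpotent G := hG.isNilpotent
  -- Step 1 : γ₂(G) is not contained in γ₃(G), since `G` is a nonabelian nilpotent group.
  have hne : ¬ (⊤ : Subgroup G).lowerCentralSeries 1 ≤ (⊤ : Subgroup G).lowerCentralSeries 2 := by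
    intro hle
    have heq : (⊤ : Subgroup G).lowerCentralSeries 2 = (⊤ : Subgroup G).lowerCentralSeries 1 :=
      le_antisymm ((⊤ : Subgroup G).lowerCentralSeries_antitone one_le_two) hle
    have hall : ∀ n, (⊤ : Subgroup G).lowerCentralSeries (1 + n) = (⊤ : Subgroup G).lowerCentralSeries 1 := by
      intro n
      induction n with
      | zero => rfl
      | succ k ih =>
        have h1 : (⊤ : Subgroup G).lowerCentralSeries (1 + (k + 1)) = ⁅(⊤ : Subgroup G).lowerCentralSeries (1 + k), ⊤⁆ := rfl
        have h2 : (⊤ : Subgroup G).lowerCentralSeries 2 = ⁅(⊤ : Subgroup G).lowerCentralSeries 1, ⊤⁆ := rfl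
        rw [h1, ih, ← h2, heq]
    have hbot : (⊤ : Subgroup G).lowerCentralSeries 1 = ⊥ := by
      have h1 := hall (Group.nilpotencyClass G)
      have h2 : (⊤ : Subgroup G).lowerCentralSeries (1 + Group.nilpotencyClass G) ≤ ⊥ := by
        rw [← Subgroup.lowerCentralSeries_nilpotencyClass (G := G)]
        exact (⊤ : Subgroup G).lowerCentralSeries_antitone (Nat.le_add_left _ _)
      exact le_bot_iff.mp (h1 ▸ h2)
    apply hnab
    intro a b
    have hab : ⁅a, b⁆ ∈ (⊤ : Subgroup G).lowerCentralSeries 1 := by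
      rw [Subgroup.top_lowerCentralSeries_one, _root_.commutator_def]
      exact commutator_mem_commutator (mem_top a) (mem_top b)
    rw [hbot, Subgroup.mem_bot] at hab
    exact commutatorElement_eq_one_iff_mul_comm.mp hab
  -- Step 2 : pass to the quotient `Q = G ⧸ γ₃(G)`.
  set N := (⊤ : Subgroup G).lowerCentralSeries 2 with hNdef
  let π : G →* G ⧸ N := QuotientGroup.mk' N
  have hπ : Function.Surjective π := QuotientGroup.mk'_surjective N
  have hker : π.ker = N := QuotientGroup.ker_mk' N
  have hmaptop : (⊤ : Subgroup G).map π = ⊤ := Subgroup.map_top_of_surjective π hπ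
  have hmapC : (commutator G).map π = commutator (G ⧸ N) := by
    rw [_root_.commutator_def, Subgroup.map_commutator, hmaptop, ← _root_.commutator_def]
  have hmap1 : ((⊤ : Subgroup G).lowerCentralSeries 1).map π = commutator (G ⧸ N) := by
    rw [Subgroup.top_lowerCentralSeries_one]; exact hmapC
  have hlcs2Q : (⊤ : Subgroup (G ⧸ N)).lowerCentralSeries 2 = ⊥ := by
    have h2 : (⊤ : Subgroup (G ⧸ N)).lowerCentralSeries 2 = ⁅(⊤ : Subgroup (G ⧸ N)).lowerCentralSeries 1, ⊤⁆ := rfl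
    have h2' : (⊤ : Subgroup G).lowerCentralSeries 2 = ⁅(⊤ : Subgroup G).lowerCentralSeries 1, ⊤⁆ := rfl
    rw [h2, Subgroup.top_lowerCentralSeries_one, ← hmapC, ← Subgroup.top_lowerCentralSeries_one, ← hmaptop,
      ← Subgroup.map_commutator, ← h2']
    exact (Subgroup.map_eq_bot_iff _).mpr (le_of_eq hker.symm)
  -- the commutator subgroup of `Q` is central
  have hcen : ∀ w ∈ commutator (G ⧸ N), ∀ t : G ⧸ N, w * t = t * w := by
    intro w hw t
    have hmem : ⁅w, t⁆ ∈ (⊤ : Subgroup (G ⧸ N)).lowerCentralSeries 2 := by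
      have h2 : (⊤ : Subgroup (G ⧸ N)).lowerCentralSeries 2 = ⁅(⊤ : Subgroup (G ⧸ N)).lowerCentralSeries 1, ⊤⁆ := rfl
      rw [h2]
      exact commutator_mem_commutator (by rwa [Subgroup.top_lowerCentralSeries_one]) (mem_top t)
    rw [hlcs2Q, Subgroup.mem_bot] at hmem
    exact commutatorElement_eq_one_iff_mul_comm.mp hmem
  have hconj : ∀ w ∈ commutator (G ⧸ N), ∀ t : G ⧸ N, t * w * t⁻¹ = w := by
    intro w hw t
    rw [mul_inv_eq_iff_eq_mul]
    exact (hcen w hw t).symm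
  -- Step 3 : choose generators `x, y` of `G` modulo `G'`.
  obtain ⟨e⟩ := htype
  set u : G ⧸ commutator G :=
    e.symm (Multiplicative.ofAdd ((1 : ZMod 2), (0 : ZMod 4))) with hu
  set v : G ⧸ commutator G :=
    e.symm (Multiplicative.ofAdd ((0 : ZMod 2), (1 : ZMod 4))) with hv
  obtain ⟨x, hxu⟩ := QuotientGroup.mk'_surjective (commutator G) u
  obtain ⟨y, hyv⟩ := QuotientGroup.mk'_surjective (commutator G) v
  -- `x²` lies in the commutator subgroup
  have hu2 : u ^ 2 = 1 := by
    have h2 : u ^ 2 = e.symm (Multiplicative.ofAdd ((1 : ZMod 2), (0 : ZMod 4)) ^ 2) := by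
      rw [hu, map_pow]
    rw [h2, aux_sq_24, map_one]
  have hx2 : x ^ 2 ∈ commutator G := by
    have : QuotientGroup.mk' (commutator G) (x ^ 2) = 1 := by
      rw [map_pow, hxu, hu2]
    rwa [← QuotientGroup.ker_mk' (commutator G)]
  -- `x` and `y` generate `G` modulo `G'`
  have hgenQ : closure ({u, v} : Set (G ⧸ commutator G)) = ⊤ := by
    rw [eq_top_iff']
    intro g
    refine aux_mem_closure_pair u v g (Multiplicative.toAdd (e g)).1.val
      (Multiplicative.toAdd (e g)).2.val ?_
    have h1 := aux_gen_24 (Multiplicative.toAdd (e g))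
    have h3 : e.symm (Multiplicative.ofAdd (Multiplicative.toAdd (e g))) = g := by simp
    have h4 : e.symm (Multiplicative.ofAdd (Multiplicative.toAdd (e g)))
        = u ^ (Multiplicative.toAdd (e g)).1.val * v ^ (Multiplicative.toAdd (e g)).2.val := by
      rw [h1, map_mul, map_pow, map_pow, ← hu, ← hv]
    exact h3.symm.trans h4
  have hgen : closure ({x, y} : Set G) ⊔ commutator G = ⊤ := by
    have h1 : (closure ({x, y} : Set G)).map (QuotientGroup.mk' (commutator G)) = ⊤ := by
      rw [MonoidHom.map_closure]
      have himg : (QuotientGroup.mk' (commutator G)) '' {x, y} = {u, v} := by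
        rw [Set.image_pair, hxu, hyv]
      rw [himg, hgenQ]
    have h2 := Subgroup.comap_map_eq (f := QuotientGroup.mk' (commutator G))
      (closure ({x, y} : Set G))
    rw [h1, QuotientGroup.ker_mk'] at h2
    rw [← h2, Subgroup.comap_top]
  -- Step 4 : the element `c = ⁅x,y⁆` generates `Q'` and has order dividing 2.
  set X : G ⧸ N := π x with hX
  set Y : G ⧸ N := π y with hY
  set c : G ⧸ N := ⁅X, Y⁆ with hc
  have hcmem : c ∈ commutator (G ⧸ N) := by
    rw [hc, _root_.commutator_def]
    exact commutator_mem_commutator (mem_top X) (mem_top Y)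
  -- image of the generation statement in `Q`
  have htopQ : closure ({X, Y} : Set (G ⧸ N)) ⊔ commutator (G ⧸ N) = ⊤ := by
    have h1 := congrArg (Subgroup.map π) hgen
    rw [Subgroup.map_sup, MonoidHom.map_closure, hmapC, hmaptop, Set.image_pair] at h1
    exact h1
  set S : Set (G ⧸ N) := {X, Y} ∪ (commutator (G ⧸ N) : Set (G ⧸ N)) with hS
  have htopS : closure S = ⊤ := by
    rw [hS, Subgroup.closure_union, Subgroup.closure_eq, htopQ]
  -- commutators of arbitrary elements always lie in `Q'`, hence are central
  have hcomm_mem : ∀ a b : G ⧸ N, ⁅a, b⁆ ∈ commutator (G ⧸ N) := by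
    intro a b
    rw [_root_.commutator_def]
    exact commutator_mem_commutator (mem_top a) (mem_top b)
  -- auxiliary: commutators with `X` or `Y` land in `zpowers c`
  have aux1 : ∀ h : G ⧸ N, ⁅X, h⁆ ∈ zpowers c ∧ ⁅Y, h⁆ ∈ zpowers c := by
    intro h
    have hh : h ∈ closure S := by rw [htopS]; exact mem_top h
    refine Subgroup.closure_induction
      (p := fun t _ => ⁅X, t⁆ ∈ zpowers c ∧ ⁅Y, t⁆ ∈ zpowers c) ?_ ?_ ?_ ?_ hh
    · intro t ht
      show ⁅X, t⁆ ∈ zpowers c ∧ ⁅Y, t⁆ ∈ zpowers c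
      rw [hS, Set.mem_union, Set.mem_insert_iff, Set.mem_singleton_iff, SetLike.mem_coe] at ht
      rcases ht with (ht | ht) | ht
      · subst ht
        refine ⟨by rw [commutatorElement_self]; exact one_mem _, ?_⟩
        rw [← commutatorElement_inv]
        exact inv_mem (mem_zpowers c)
      · subst ht
        exact ⟨mem_zpowers c, by rw [commutatorElement_self]; exact one_mem _⟩
      · have h1 : ⁅X, t⁆ = 1 := commutatorElement_eq_one_iff_mul_comm.mpr (hcen t ht X).symm
        have h2 : ⁅Y, t⁆ = 1 := commutatorElement_eq_one_iff_mul_comm.mpr (hcen t ht Y).symm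
        exact ⟨h1 ▸ one_mem _, h2 ▸ one_mem _⟩
    · show ⁅X, (1 : G ⧸ N)⁆ ∈ zpowers c ∧ ⁅Y, (1 : G ⧸ N)⁆ ∈ zpowers c
      constructor <;> (rw [commutatorElement_one_right]; exact one_mem _)
    · intro s t hs ht ihs iht
      show ⁅X, s * t⁆ ∈ zpowers c ∧ ⁅Y, s * t⁆ ∈ zpowers c
      have key : ∀ a : G ⧸ N, ⁅a, s⁆ ∈ zpowers c → ⁅a, t⁆ ∈ zpowers c →
          ⁅a, s * t⁆ ∈ zpowers c := by
        intro a h1 h2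
        have hid : ⁅a, s * t⁆ = ⁅a, s⁆ * (s * ⁅a, t⁆ * s⁻¹) := by group
        rw [hid, hconj _ (hcomm_mem a t) s]
        exact mul_mem h1 h2
      exact ⟨key X ihs.1 iht.1, key Y ihs.2 iht.2⟩
    · intro t ht iht
      show ⁅X, t⁻¹⁆ ∈ zpowers c ∧ ⁅Y, t⁻¹⁆ ∈ zpowers c
      have key : ∀ a : G ⧸ N, ⁅a, t⁆ ∈ zpowers c → ⁅a, t⁻¹⁆ ∈ zpowers c := by
        intro a h1
        have hid : ⁅a, t⁻¹⁆ = t⁻¹ * ⁅a, t⁆⁻¹ * (t⁻¹)⁻¹ := by group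
        rw [hid, hconj _ (inv_mem (hcomm_mem a t)) t⁻¹]
        exact inv_mem h1
      exact ⟨key X iht.1, key Y iht.2⟩
  have aux2 : ∀ g h : G ⧸ N, ⁅g, h⁆ ∈ zpowers c := by
    intro g h
    have hg : g ∈ closure S := by rw [htopS]; exact mem_top g
    refine Subgroup.closure_induction (p := fun t _ => ⁅t, h⁆ ∈ zpowers c) ?_ ?_ ?_ ?_ hg
    · intro t ht
      show ⁅t, h⁆ ∈ zpowers c
      rw [hS, Set.mem_union, Set.mem_insert_iff, Set.mem_singleton_iff, SetLike.mem_coe] at ht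
      rcases ht with (ht | ht) | ht
      · subst ht; exact (aux1 h).1
      · subst ht; exact (aux1 h).2
      · have h1 : ⁅t, h⁆ = 1 := commutatorElement_eq_one_iff_mul_comm.mpr (hcen t ht h)
        exact h1 ▸ one_mem _
    · show ⁅(1 : G ⧸ N), h⁆ ∈ zpowers c
      rw [commutatorElement_one_left]; exact one_mem _
    · intro s t hs ht ihs iht
      show ⁅s * t, h⁆ ∈ zpowers c
      have hid : ⁅s * t, h⁆ = (s * ⁅t, h⁆ * s⁻¹) * ⁅s, h⁆ := by group
      rw [hid, hconj _ (hcomm_mem t h) s]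
      exact mul_mem iht ihs
    · intro t ht iht
      show ⁅t⁻¹, h⁆ ∈ zpowers c
      have hid : ⁅t⁻¹, h⁆ = t⁻¹ * ⁅t, h⁆⁻¹ * (t⁻¹)⁻¹ := by group
      rw [hid, hconj _ (inv_mem (hcomm_mem t h)) t⁻¹]
      exact inv_mem iht
  have hkey : commutator (G ⧸ N) ≤ zpowers c := by
    rw [_root_.commutator_def]
    exact Subgroup.commutator_le.mpr fun g _ h _ => aux2 g h
  -- `c` has order dividing 2
  have hX2mem : X ^ 2 ∈ commutator (G ⧸ N) := by
    rw [← hmapC]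
    have : X ^ 2 = π (x ^ 2) := by rw [map_pow]
    rw [this]
    exact Subgroup.mem_map_of_mem π hx2
  have hc2 : c ^ 2 = 1 := by
    have h0 : ⁅X ^ 2, Y⁆ = 1 := commutatorElement_eq_one_iff_mul_comm.mpr (hcen _ hX2mem Y)
    have h0' : ⁅X * X, Y⁆ = 1 := by rw [← pow_two]; exact h0
    have idsq : ⁅X * X, Y⁆ = X * ⁅X, Y⁆ * X⁻¹ * ⁅X, Y⁆ := by group
    have hcX : X * c * X⁻¹ = c := hconj c hcmem X
    calc c ^ 2 = c * c := sq c
      _ = X * c * X⁻¹ * c := by rw [hcX]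
      _ = ⁅X * X, Y⁆ := by rw [idsq, hc]
      _ = 1 := h0'
  -- Step 5 : conclude.
  rw [← hker, Subgroup.relIndex_ker, hmap1]
  have hdvd : Nat.card (commutator (G ⧸ N)) ∣ 2 := by
    calc Nat.card (commutator (G ⧸ N)) ∣ Nat.card (zpowers c) :=
          Subgroup.card_dvd_of_le hkey
      _ = orderOf c := Nat.card_zpowers c
      _ ∣ 2 := orderOf_dvd_of_pow_eq_one hc2
  have hne1 : Nat.card (commutator (G ⧸ N)) ≠ 1 := by
    intro h1eq
    rw [Subgroup.card_eq_one] at h1eq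
    have hbot := h1eq
    apply hne
    have h1 : ((⊤ : Subgroup G).lowerCentralSeries 1).map π = ⊥ := hmap1.trans hbot
    have h2 := (Subgroup.map_eq_bot_iff _).mp h1
    rwa [hker] at h2
  rcases (Nat.prime_two.eq_one_or_self_of_dvd _ hdvd) with h | h
  · exact absurd h hne1
  · exact h
end

section
/- Let G = Gₘ be one of the metacyclic nonmodular 2-groups of order 2ⁿ with G/G' of type (2,4), and let M = ⟨a, b²⟩. Then M' has order at most 2; precisely M' = 1 if G = G₁, G₂, or G₃, and M' = ⟨a^{2^{n-3}}⟩ if G = G₄. -/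
open scoped commutatorElement

private lemma zpow_eq_of_dvd' {G : Type*} [Group G] {a : G} {m : ℤ}
    (ha : a ^ m = 1) {i j : ℤ} (h : m ∣ i - j) : a ^ i = a ^ j := by
  obtain ⟨q, hq⟩ := h
  have hij : i = j + m * q := by linarith
  rw [hij, zpow_add, zpow_mul, ha, one_zpow, mul_one]

private lemma commute_of_closure' {G : Type*} [Group G] {S : Set G}
    (h : ∀ x ∈ S, ∀ y ∈ S, Commute x y) :
    ∀ x ∈ Subgroup.closure S, ∀ y ∈ Subgroup.closure S, Commute x y := by
  intro x hx y hy
  have h1 : Subgroup.closure S ≤ Subgroup.centralizer S := by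
    rw [Subgroup.closure_le]
    intro s hs
    rw [SetLike.mem_coe, Subgroup.mem_centralizer_iff]
    intro g hg
    exact h g hg s hs
  have h2 : Subgroup.closure S ≤ Subgroup.centralizer {x} := by
    rw [Subgroup.closure_le]
    intro s hs
    rw [SetLike.mem_coe, Subgroup.mem_centralizer_iff]
    intro g hg
    rw [Set.mem_singleton_iff] at hg
    subst hg
    exact (Subgroup.mem_centralizer_iff.mp (h1 hx) s hs).symm
  exact Subgroup.mem_centralizer_iff.mp (h2 hy) x rfl

/-- Let `G = Gₘ = ⟨a, b : a^{2^{n-2}} = 1, b⁴ = z₁, a^b = a⁻¹z₂⟩` be one of the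
metacyclic nonmodular 2-groups of order `2ⁿ` with `G/G'` of type `(2,4)`, and
let `M = ⟨a, b²⟩`. Then `M'` has order at most 2; precisely `M' = 1` if
`G = G₁, G₂, G₃`, and `M' = ⟨a^{2^{n-3}}⟩` if `G = G₄`. -/
theorem derived_of_M_small
    {G : Type*} [Group G] (n : ℕ) (hn : 4 ≤ n) (a b z₁ z₂ : G)
    (ha : a ^ 2 ^ (n - 2) = 1) (hb4 : b ^ 4 = z₁)
    (hconj : b⁻¹ * a * b = a⁻¹ * z₂)
    (hgen : Subgroup.closure {a, b} = ⊤)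
    (hfam : (z₁ = 1 ∧ z₂ = 1) ∨
      (5 ≤ n ∧ z₁ = 1 ∧ z₂ = a ^ 2 ^ (n - 3)) ∨
      (5 ≤ n ∧ z₁ = a ^ 2 ^ (n - 3) ∧ z₂ = 1) ∨
      (6 ≤ n ∧ z₁ = 1 ∧ z₂ = a ^ 2 ^ (n - 4)))
    (M : Subgroup G) (hM : M = Subgroup.closure {a, b ^ 2}) :
    Nat.card (Subgroup.map M.subtype (commutator ↥M)) ≤ 2 ∧
    (((z₁ = 1 ∧ z₂ = 1) ∨ (5 ≤ n ∧ z₁ = 1 ∧ z₂ = a ^ 2 ^ (n - 3)) ∨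
        (5 ≤ n ∧ z₁ = a ^ 2 ^ (n - 3) ∧ z₂ = 1)) →
      Subgroup.map M.subtype (commutator ↥M) = ⊥) ∧
    ((6 ≤ n ∧ z₁ = 1 ∧ z₂ = a ^ 2 ^ (n - 4)) →
      Subgroup.map M.subtype (commutator ↥M) = Subgroup.zpowers (a ^ 2 ^ (n - 3))) := by
  subst hM
  set c := b ^ 2 with hc_def
  set M := Subgroup.closure {a, c} with hM_def
  -- the relation in zpow form
  have ha' : a ^ ((2 : ℤ) ^ (n - 2)) = 1 := by
    have h2 : ((2 : ℤ) ^ (n - 2)) = ((2 ^ (n - 2) : ℕ) : ℤ) := by push_cast; ring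
    rw [h2, zpow_natCast, ha]
  have hkey1 : ∀ k : ℕ, z₂ = a ^ k → b⁻¹ * a * b = a ^ ((k : ℤ) - 1) := by
    intro k hk
    rw [hconj, hk, show (k : ℤ) - 1 = -1 + k by ring, zpow_add, zpow_neg_one, zpow_natCast]
  have hkey2 : ∀ k : ℕ, z₂ = a ^ k → c⁻¹ * a * c = a ^ (((k : ℤ) - 1) ^ 2) := by
    intro k hk
    have h1 := hkey1 k hk
    have h2 : c⁻¹ * a * c = b⁻¹ * (b⁻¹ * a * b) * b := by
      rw [hc_def]; simp [pow_two, mul_inv_rev, mul_assoc]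
    have h3 : b⁻¹ * a ^ ((k : ℤ) - 1) * b = (b⁻¹ * a * b) ^ ((k : ℤ) - 1) := by
      rw [show b⁻¹ * a * b = b⁻¹ * a * b⁻¹⁻¹ by rw [inv_inv], conj_zpow, inv_inv]
    rw [h2, h1, h3, h1, ← zpow_mul, ← sq]
  -- map to the commutator subgroup in G
  have hmap : Subgroup.map M.subtype (commutator ↥M) = ⁅M, M⁆ := by
    rw [commutator_def, Subgroup.map_commutator]
    congr 1 <;> rw [← MonoidHom.range_eq_map, Subgroup.range_subtype]
  -- the abelian cases
  have habel : Commute a c → Subgroup.map M.subtype (commutator ↥M) = ⊥ := by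
    intro hcomm
    have hall : ∀ x ∈ M, ∀ y ∈ M, Commute x y := by
      apply commute_of_closure'
      rintro x (rfl | rfl) y (rfl | rfl)
      · exact Commute.refl _
      · exact hcomm
      · exact hcomm.symm
      · exact Commute.refl _
    have hcb : commutator ↥M = ⊥ := by
      rw [commutator_def, eq_bot_iff, Subgroup.commutator_le]
      intro g₁ _ g₂ _
      rw [Subgroup.mem_bot, commutatorElement_eq_one_iff_commute]
      exact Subtype.ext (hall g₁ g₁.2 g₂ g₂.2)
    rw [hcb, Subgroup.map_bot]
  have conj_fix_comm : ∀ x y : G, x⁻¹ * y * x = y → Commute x y := by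
    intro x y hxy
    have h1 : x * (x⁻¹ * y * x) = x * y := by rw [hxy]
    rw [show x * (x⁻¹ * y * x) = y * x by simp [mul_assoc]] at h1
    exact h1.symm
  have hcomm_of_fix : c⁻¹ * a * c = a → Commute a c := fun h => (conj_fix_comm c a h).symm
  -- case 1: z₂ = 1
  have case1 : z₂ = 1 → Commute a c := by
    intro hz2
    have h := hkey2 0 (by simp [hz2])
    norm_num at h
    exact hcomm_of_fix h
  -- case 2: n ≥ 5, z₂ = a ^ 2 ^ (n-3)
  have case2 : 5 ≤ n → z₂ = a ^ 2 ^ (n - 3) → Commute a c := by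
    intro hn5 hz2
    obtain ⟨m, rfl⟩ : ∃ m, n = m + 5 := ⟨n - 5, by omega⟩
    have h := hkey2 (2 ^ (m + 2)) (by rw [hz2, show m + 5 - 3 = m + 2 from by omega])
    have ha'' : a ^ ((2 : ℤ) ^ (m + 3)) = 1 := by
      rw [show m + 3 = m + 5 - 2 from by omega]; exact ha'
    have hd : ((2 : ℤ) ^ (m + 3)) ∣ ((((2 ^ (m + 2) : ℕ) : ℤ) - 1) ^ 2 - 1) := by
      push_cast
      exact ⟨2 ^ (m + 1) - 1, by ring⟩
    rw [zpow_eq_of_dvd' ha'' hd, zpow_one] at h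
    exact hcomm_of_fix h
  -- case 4: n ≥ 6, z₂ = a ^ 2 ^ (n-4)
  have case4 : 6 ≤ n → z₂ = a ^ 2 ^ (n - 4) →
      Subgroup.map M.subtype (commutator ↥M) = Subgroup.zpowers (a ^ 2 ^ (n - 3)) := by
    intro hn6 hz2
    obtain ⟨m, rfl⟩ : ∃ m, n = m + 6 := ⟨n - 6, by omega⟩
    rw [show m + 6 - 3 = m + 3 from by omega]
    have ha'' : a ^ ((2 : ℤ) ^ (m + 4)) = 1 := by
      rw [show m + 4 = m + 6 - 2 from by omega]; exact ha'
    set t := a ^ (2 ^ (m + 3) : ℕ) with ht_def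
    have htz : t = a ^ ((2 : ℤ) ^ (m + 3)) := by
      rw [ht_def, ← zpow_natCast]; push_cast; ring_nf
    have hb1 := hkey1 (2 ^ (m + 2)) (by rw [hz2, show m + 6 - 4 = m + 2 from by omega])
    have h := hkey2 (2 ^ (m + 2)) (by rw [hz2, show m + 6 - 4 = m + 2 from by omega])
    have hd : ((2 : ℤ) ^ (m + 4)) ∣
        ((((2 ^ (m + 2) : ℕ) : ℤ) - 1) ^ 2 - (1 - 2 ^ (m + 3))) := by
      push_cast
      exact ⟨2 ^ m, by ring⟩
    rw [zpow_eq_of_dvd' ha'' hd] at h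
    -- h : c⁻¹ * a * c = a ^ ((1 : ℤ) - 2 ^ (m + 3))
    have hta : Commute a t := by rw [htz]; exact Commute.self_zpow a _
    have ht2 : t * t = 1 := by
      rw [htz, ← zpow_add]
      calc a ^ ((2:ℤ) ^ (m + 3) + 2 ^ (m + 3)) = a ^ (0 : ℤ) :=
        zpow_eq_of_dvd' ha'' ⟨1, by ring⟩
      _ = 1 := zpow_zero a
    have htinv : t⁻¹ = t := inv_eq_of_mul_eq_one_right ht2
    have hconjpow : ∀ x y : G, ∀ i : ℤ, x⁻¹ * y ^ i * x = (x⁻¹ * y * x) ^ i := by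
      intro x y i
      rw [show x⁻¹ * y * x = x⁻¹ * y * x⁻¹⁻¹ by rw [inv_inv], conj_zpow, inv_inv]
    have htc : Commute c t := by
      apply conj_fix_comm
      rw [htz, hconjpow c a ((2:ℤ) ^ (m + 3)), h, ← zpow_mul]
      exact zpow_eq_of_dvd' ha'' ⟨-(2 ^ (m + 2)), by ring⟩
    have htb : Commute b t := by
      apply conj_fix_comm
      rw [htz, hconjpow b a ((2:ℤ) ^ (m + 3)), hb1, ← zpow_mul]
      exact zpow_eq_of_dvd' ha'' ⟨2 ^ (m + 1) - 1, by push_cast; ring⟩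
    -- t is central in G
    have htcen : ∀ g : G, Commute t g := by
      have hle : (⊤ : Subgroup G) ≤ Subgroup.centralizer {t} := by
        rw [← hgen, Subgroup.closure_le]
        rintro x (rfl | rfl) <;> rw [SetLike.mem_coe, Subgroup.mem_centralizer_iff]
        · intro g hg; rw [Set.mem_singleton_iff] at hg; subst hg; exact hta.symm
        · intro g hg; rw [Set.mem_singleton_iff] at hg; subst hg; exact htb.symm
      intro g
      exact Subgroup.mem_centralizer_iff.mp (hle (Subgroup.mem_top g)) t rfl
    have hZnormal : (Subgroup.zpowers t).Normal := by
      refine ⟨fun x hx g => ?_⟩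
      obtain ⟨j, rfl⟩ := Subgroup.mem_zpowers_iff.mp hx
      refine Subgroup.mem_zpowers_iff.mpr ⟨j, ?_⟩
      have e : t ^ j * g = g * t ^ j := (htcen g).zpow_left j
      calc t ^ j = t ^ j * g * g⁻¹ := by group
      _ = g * t ^ j * g⁻¹ := by rw [e]
    -- the commutator of the generators equals t
    have hac : ⁅a, c⁆ = t := by
      have h' : c⁻¹ * a * c = a * t⁻¹ := by rw [h, zpow_sub, zpow_one, ← htz]
      calc ⁅a, c⁆ = a * c * a⁻¹ * c⁻¹ := commutatorElement_def a c
      _ = c * (c⁻¹ * a * c) * a⁻¹ * c⁻¹ := by simp [mul_assoc]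
      _ = c * (a * t⁻¹) * a⁻¹ * c⁻¹ := by rw [h']
      _ = c * (t⁻¹ * a) * a⁻¹ * c⁻¹ := by rw [hta.inv_right.eq]
      _ = c * t⁻¹ * c⁻¹ := by simp [mul_assoc]
      _ = t⁻¹ * c * c⁻¹ := by rw [htc.inv_right.eq]
      _ = t := by rw [htinv]; simp [mul_assoc]
    rw [hmap]
    apply le_antisymm
    · -- upper bound via quotient by zpowers t
      rw [Subgroup.commutator_le]
      intro x hx y hy
      set f := QuotientGroup.mk' (Subgroup.zpowers t) with hf_def
      have hker : ∀ g : G, f g = 1 → g ∈ Subgroup.zpowers t := by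
        intro g hg
        have := QuotientGroup.ker_mk' (Subgroup.zpowers t)
        rw [← this]; exact hg
      apply hker
      rw [map_commutatorElement, commutatorElement_eq_one_iff_commute]
      have hbase : Commute (f a) (f c) := by
        rw [← commutatorElement_eq_one_iff_commute, ← map_commutatorElement, hac]
        exact (QuotientGroup.eq_one_iff t).mpr (Subgroup.mem_zpowers t)
      have himg : ∀ g ∈ M, f g ∈ Subgroup.closure {f a, f c} := by
        intro g hg
        have h1 : f g ∈ Subgroup.map f M := Subgroup.mem_map_of_mem f hg
        rw [hM_def, MonoidHom.map_closure, Set.image_pair] at h1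
        exact h1
      exact commute_of_closure'
        (by rintro u (rfl | rfl) v (rfl | rfl)
            · exact Commute.refl _
            · exact hbase
            · exact hbase.symm
            · exact Commute.refl _)
        (f x) (himg x hx) (f y) (himg y hy)
    · rw [Subgroup.zpowers_le, ← hac]
      exact Subgroup.commutator_mem_commutator
        (Subgroup.subset_closure (Set.mem_insert a _))
        (Subgroup.subset_closure (Set.mem_insert_of_mem a rfl))
  -- assemble
  refine ⟨?_, ?_, ?_⟩
  · rcases hfam with ⟨_, hz2⟩ | ⟨hn5, _, hz2⟩ | ⟨_, _, hz2⟩ | ⟨hn6, _, hz2⟩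
    · rw [habel (case1 hz2)]; simp
    · rw [habel (case2 hn5 hz2)]; simp
    · rw [habel (case1 hz2)]; simp
    · rw [case4 hn6 hz2, Nat.card_zpowers]
      have h2 : (a ^ 2 ^ (n - 3)) ^ 2 = 1 := by
        rw [← pow_mul, show 2 ^ (n - 3) * 2 = 2 ^ (n - 2) from by
          rw [← pow_succ]; congr 1; omega]
        exact ha
      exact Nat.le_of_dvd (by norm_num) (orderOf_dvd_of_pow_eq_one h2)
  · rintro (⟨_, hz2⟩ | ⟨hn5, _, hz2⟩ | ⟨_, _, hz2⟩)
    · exact habel (case1 hz2)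
    · exact habel (case2 hn5 hz2)
    · exact habel (case1 hz2)
  · rintro ⟨hn6, _, hz2⟩
    exact case4 hn6 hz2
end
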